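/- arXiv:1503.05413 — 9 statements merged into one kernel-verified Lean document; each statement's English description precedes it below -/
import Mathlib

section
/- De Moivre's formula (timelike vector part case) for left matrices: let u = (u₁, u₂, u₃) satisfy -u₁² + u₂² + u₃² = -1, let ε = u₁i + u₂j + u₃k, N > 0, θ ∈ ℝ, and q = N(cos θ + ε sin θ). Then for every natural number n, (L_q)ⁿ = Nⁿ (cos(nθ) I₄ + sin(nθ) L_ε). -/
open Matrix Real

namespace SplitQuat

noncomputable def L (q : QuaternionAlgebra ℝ (-1) 0 1) : Matrix (Fin 4) (Fin 4) ℝ :=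
  !![q.re, -q.imI, q.imJ, q.imK;
     q.imI, q.re, q.imK, -q.imJ;
     q.imJ, q.imK, q.re, -q.imI;
     q.imK, -q.imJ, q.imI, q.re]

noncomputable def R (q : QuaternionAlgebra ℝ (-1) 0 1) : Matrix (Fin 4) (Fin 4) ℝ :=
  !![q.re, -q.imI, q.imJ, q.imK;
     q.imI, q.re, -q.imK, q.imJ;
     q.imJ, -q.imK, q.re, q.imI;
     q.imK, q.imJ, -q.imI, q.re]


lemma LL_eps (u₁ u₂ u₃ : ℝ) (h : -u₁ ^ 2 + u₂ ^ 2 + u₃ ^ 2 = -1) :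
    L ⟨0, u₁, u₂, u₃⟩ * L ⟨0, u₁, u₂, u₃⟩ = -1 := by
  ext i j
  fin_cases i <;> fin_cases j <;>
    simp [L, Matrix.mul_apply, Fin.sum_univ_four, Matrix.one_apply] <;> nlinarith [h]

theorem deMoivre_L_timelike (u₁ u₂ u₃ : ℝ) (h : -u₁ ^ 2 + u₂ ^ 2 + u₃ ^ 2 = -1)
    (N θ : ℝ) (hN : 0 < N)
    (q : QuaternionAlgebra ℝ (-1) 0 1)
    (hq : q = ⟨N * Real.cos θ, N * u₁ * Real.sin θ, N * u₂ * Real.sin θ, N * u₃ * Real.sin θ⟩)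
    (n : ℕ) :
    (L q) ^ n = N ^ n • (Real.cos (n * θ) • (1 : Matrix (Fin 4) (Fin 4) ℝ) +
      Real.sin (n * θ) • L ⟨0, u₁, u₂, u₃⟩) := by
  set E := L ⟨0, u₁, u₂, u₃⟩ with hE
  have hEE : E * E = -1 := LL_eps u₁ u₂ u₃ h
  have hL : L q = N • (Real.cos θ • (1 : Matrix (Fin 4) (Fin 4) ℝ) + Real.sin θ • E) := by
    subst hq
    ext i j
    fin_cases i <;> fin_cases j <;>
      simp [L, hE, Matrix.one_apply] <;> ring
  induction n with
  | zero => simp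
  | succ n ih =>
    rw [pow_succ, ih, hL]
    have : ((n : ℝ) + 1) * θ = n * θ + θ := by ring
    push_cast
    rw [this, Real.cos_add, Real.sin_add]
    rw [Matrix.smul_mul, Matrix.mul_smul, smul_smul, ← pow_succ]
    congr 1
    simp only [add_mul, mul_add, Matrix.smul_mul, Matrix.mul_smul, Matrix.one_mul,
      Matrix.mul_one, hEE, smul_smul, smul_neg, smul_add, neg_smul]
    match_scalars <;> ring

end SplitQuat
end

section
/- De Moivre's formula (spacelike vector part case) for left matrices: let u = (u₁, u₂, u₃) satisfy -u₁² + u₂² + u₃² = 1, let ε = u₁i + u₂j + u₃k, N > 0, θ ∈ ℝ, and q = N(cosh θ + ε sinh θ). Then for every natural number n, (L_q)ⁿ = Nⁿ (cosh(nθ) I₄ + sinh(nθ) L_ε). -/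
open Matrix Real

namespace SplitQuat

lemma Lsq (u₁ u₂ u₃ : ℝ) (h : -u₁ ^ 2 + u₂ ^ 2 + u₃ ^ 2 = 1) :
    L ⟨0, u₁, u₂, u₃⟩ * L ⟨0, u₁, u₂, u₃⟩ = 1 := by
  ext i j
  fin_cases i <;> fin_cases j <;>
    simp [L, Matrix.mul_apply, Fin.sum_univ_succ, Matrix.one_apply] <;> nlinarith [h]

theorem deMoivre_L_spacelike (u₁ u₂ u₃ : ℝ) (h : -u₁ ^ 2 + u₂ ^ 2 + u₃ ^ 2 = 1)
    (N θ : ℝ) (hN : 0 < N)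
    (q : QuaternionAlgebra ℝ (-1) 0 1)
    (hq : q = ⟨N * Real.cosh θ, N * u₁ * Real.sinh θ, N * u₂ * Real.sinh θ, N * u₃ * Real.sinh θ⟩)
    (n : ℕ) :
    (L q) ^ n = N ^ n • (Real.cosh (n * θ) • (1 : Matrix (Fin 4) (Fin 4) ℝ) +
      Real.sinh (n * θ) • L ⟨0, u₁, u₂, u₃⟩) := by
  set E := L ⟨0, u₁, u₂, u₃⟩ with hE
  have hLq : L q = N • (Real.cosh θ • (1 : Matrix (Fin 4) (Fin 4) ℝ) + Real.sinh θ • E) := by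
    subst hq
    ext i j
    fin_cases i <;> fin_cases j <;>
      simp [L, hE, Matrix.one_apply, mul_comm] <;> ring
  induction n with
  | zero => simp
  | succ n ih =>
    have hE2 : E * E = 1 := Lsq u₁ u₂ u₃ h
    rw [pow_succ, ih, hLq]
    push_cast
    rw [add_mul (n : ℝ), one_mul, Real.cosh_add, Real.sinh_add]
    simp only [Matrix.smul_mul, Matrix.mul_smul, Matrix.add_mul, Matrix.mul_add,
      Matrix.one_mul, Matrix.mul_one, smul_add, smul_smul, ← hE, hE2, pow_succ]
    module

end SplitQuat
end

section
/- De Moivre's formula (timelike vector part case) for right matrices: let u = (u₁, u₂, u₃) satisfy -u₁² + u₂² + u₃² = -1, let ε = u₁i + u₂j + u₃k, N > 0, θ ∈ ℝ, and q = N(cos θ + ε sin θ). Then for every natural number n, (R_q)ⁿ = Nⁿ (cos(nθ) I₄ + sin(nθ) R_ε). -/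
open Matrix Real

namespace SplitQuat

theorem deMoivre_R_timelike (u₁ u₂ u₃ : ℝ) (h : -u₁ ^ 2 + u₂ ^ 2 + u₃ ^ 2 = -1)
    (N θ : ℝ) (hN : 0 < N)
    (q : QuaternionAlgebra ℝ (-1) 0 1)
    (hq : q = ⟨N * Real.cos θ, N * u₁ * Real.sin θ, N * u₂ * Real.sin θ, N * u₃ * Real.sin θ⟩)
    (n : ℕ) :
    (R q) ^ n = N ^ n • (Real.cos (n * θ) • (1 : Matrix (Fin 4) (Fin 4) ℝ) +
      Real.sin (n * θ) • R ⟨0, u₁, u₂, u₃⟩) := by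
  have hRe2 : R ⟨0, u₁, u₂, u₃⟩ * R ⟨0, u₁, u₂, u₃⟩ = -1 := by
    ext i j
    fin_cases i <;> fin_cases j <;>
      simp [R, Matrix.mul_apply, Fin.sum_univ_four, Matrix.one_apply] <;> nlinarith [h]
  have hRq : R q = (N * Real.cos θ) • (1 : Matrix (Fin 4) (Fin 4) ℝ) +
      (N * Real.sin θ) • R ⟨0, u₁, u₂, u₃⟩ := by
    subst hq
    ext i j
    fin_cases i <;> fin_cases j <;> simp [R, Matrix.one_apply] <;> ring
  induction n with
  | zero => simp
  | succ n ih =>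
    rw [pow_succ, ih, hRq]
    rw [smul_add, add_mul, Nat.cast_succ]
    have hc : Real.cos ((n + 1 : ℝ) * θ) =
        Real.cos (n * θ) * Real.cos θ - Real.sin (n * θ) * Real.sin θ := by
      rw [add_mul, one_mul, Real.cos_add]
    have hs : Real.sin ((n + 1 : ℝ) * θ) =
        Real.sin (n * θ) * Real.cos θ + Real.cos (n * θ) * Real.sin θ := by
      rw [add_mul, one_mul, Real.sin_add]
    rw [hc, hs]
    simp only [Matrix.add_mul, Matrix.mul_add, smul_mul_assoc, Matrix.mul_smul,
      Matrix.one_mul, Matrix.mul_one, hRe2, smul_smul, smul_add, smul_neg, pow_succ]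
    module

end SplitQuat
end

section
/- De Moivre's formula (spacelike vector part case) for right matrices: let u = (u₁, u₂, u₃) satisfy -u₁² + u₂² + u₃² = 1, let ε = u₁i + u₂j + u₃k, N > 0, θ ∈ ℝ, and q = N(cosh θ + ε sinh θ). Then for every natural number n, (R_q)ⁿ = Nⁿ (cosh(nθ) I₄ + sinh(nθ) R_ε). -/
open Matrix Real

namespace SplitQuat

lemma Rsq (u₁ u₂ u₃ : ℝ) (h : -u₁ ^ 2 + u₂ ^ 2 + u₃ ^ 2 = 1) :
    R ⟨0, u₁, u₂, u₃⟩ * R ⟨0, u₁, u₂, u₃⟩ = 1 := by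
  ext i j
  fin_cases i <;> fin_cases j <;>
    simp [R, Matrix.mul_apply, Fin.sum_univ_four, Matrix.one_apply] <;>
    first | linear_combination h | linear_combination -h | ring

theorem deMoivre_R_spacelike (u₁ u₂ u₃ : ℝ) (h : -u₁ ^ 2 + u₂ ^ 2 + u₃ ^ 2 = 1)
    (N θ : ℝ) (hN : 0 < N)
    (q : QuaternionAlgebra ℝ (-1) 0 1)
    (hq : q = ⟨N * Real.cosh θ, N * u₁ * Real.sinh θ, N * u₂ * Real.sinh θ, N * u₃ * Real.sinh θ⟩)
    (n : ℕ) :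
    (R q) ^ n = N ^ n • (Real.cosh (n * θ) • (1 : Matrix (Fin 4) (Fin 4) ℝ) +
      Real.sinh (n * θ) • R ⟨0, u₁, u₂, u₃⟩) := by
  set E := R ⟨0, u₁, u₂, u₃⟩ with hE
  have hRq : R q = (N * Real.cosh θ) • (1 : Matrix (Fin 4) (Fin 4) ℝ) +
      (N * Real.sinh θ) • E := by
    subst hq
    ext i j
    fin_cases i <;> fin_cases j <;>
      simp [R, hE, Matrix.one_apply] <;> ring
  induction n with
  | zero => simp
  | succ n ih =>
    rw [pow_succ, ih, hRq]
    have hEE : E * E = 1 := Rsq u₁ u₂ u₃ h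
    simp only [Matrix.smul_mul, Matrix.mul_smul, smul_smul, one_mul, mul_one, hEE,
      mul_add, add_mul, smul_add]
    push_cast
    rw [add_mul, one_mul, Real.cosh_add, Real.sinh_add, pow_succ]
    match_scalars <;> ring
end SplitQuat
end

section
/- De Moivre's formula for spacelike split quaternions, even exponent: let u = (u₁, u₂, u₃) satisfy -u₁² + u₂² + u₃² = 1, ε = u₁i + u₂j + u₃k, N > 0, θ ∈ ℝ, and q = N(sinh θ + ε cosh θ). Then for every even natural number n, (L_q)ⁿ = Nⁿ (cosh(nθ) I₄ + sinh(nθ) L_ε). -/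
open Matrix Real

namespace SplitQuat

lemma L_mul (p q : QuaternionAlgebra ℝ (-1) 0 1) : L (p * q) = L p * L q := by
  ext i j
  fin_cases i <;> fin_cases j <;>
    simp [L, Matrix.mul_apply, Fin.sum_univ_four, QuaternionAlgebra.re_mul,
      QuaternionAlgebra.imI_mul, QuaternionAlgebra.imJ_mul, QuaternionAlgebra.imK_mul] <;> ring

lemma L_one : L 1 = 1 := by
  ext i j
  fin_cases i <;> fin_cases j <;>
    simp [L, Matrix.one_apply, Matrix.vecHead, Matrix.vecTail]

lemma L_pow (q : QuaternionAlgebra ℝ (-1) 0 1) (n : ℕ) : L (q ^ n) = (L q) ^ n := by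
  induction n with
  | zero => simpa using L_one
  | succ m ih => rw [pow_succ, pow_succ, L_mul, ih]

theorem deMoivre_L_spacelikeQ_even (u₁ u₂ u₃ : ℝ) (h : -u₁ ^ 2 + u₂ ^ 2 + u₃ ^ 2 = 1)
    (N θ : ℝ) (hN : 0 < N)
    (q : QuaternionAlgebra ℝ (-1) 0 1)
    (hq : q = ⟨N * Real.sinh θ, N * u₁ * Real.cosh θ, N * u₂ * Real.cosh θ, N * u₃ * Real.cosh θ⟩)
    (n : ℕ) (hn : Even n) :
    (L q) ^ n = N ^ n • (Real.cosh (n * θ) • (1 : Matrix (Fin 4) (Fin 4) ℝ) +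
      Real.sinh (n * θ) • L ⟨0, u₁, u₂, u₃⟩) := by
  obtain ⟨m, rfl⟩ := hn
  have hsq : q ^ 2 = ⟨N ^ 2 * Real.cosh (2 * θ), N ^ 2 * Real.sinh (2 * θ) * u₁,
      N ^ 2 * Real.sinh (2 * θ) * u₂, N ^ 2 * Real.sinh (2 * θ) * u₃⟩ := by
    rw [hq, pow_two, show (2 : ℝ) * θ = θ + θ by ring]
    ext
    case re =>
      simp only [QuaternionAlgebra.re_mul, Real.cosh_add]
      linear_combination (N ^ 2 * Real.cosh θ ^ 2) * h
    all_goals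
      simp only [QuaternionAlgebra.imI_mul, QuaternionAlgebra.imJ_mul,
        QuaternionAlgebra.imK_mul, Real.sinh_add]
      ring
  have key : q ^ (m + m) = ⟨N ^ (m + m) * Real.cosh ((m + m : ℕ) * θ),
      N ^ (m + m) * Real.sinh ((m + m : ℕ) * θ) * u₁,
      N ^ (m + m) * Real.sinh ((m + m : ℕ) * θ) * u₂,
      N ^ (m + m) * Real.sinh ((m + m : ℕ) * θ) * u₃⟩ := by
    induction m with
    | zero => ext <;> simp [QuaternionAlgebra.re_one]
    | succ k ih =>
      have hk : k + 1 + (k + 1) = (k + k) + 2 := by ring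
      rw [hk, pow_add, ih, hsq]
      have hc : ((k + k + 2 : ℕ) : ℝ) * θ = (k + k : ℕ) * θ + 2 * θ := by
        push_cast; ring
      ext
      case re =>
        simp only [QuaternionAlgebra.re_mul, hc, Real.cosh_add]
        linear_combination (N ^ (k + k) * N ^ 2 * Real.sinh ((k + k : ℕ) * θ) *
          Real.sinh (2 * θ)) * h
      all_goals
        simp only [QuaternionAlgebra.imI_mul, QuaternionAlgebra.imJ_mul,
          QuaternionAlgebra.imK_mul, hc, Real.sinh_add]
        ring
  rw [← L_pow, key]
  ext i j
  fin_cases i <;> fin_cases j <;>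
    simp [L, Matrix.one_apply, Matrix.vecHead, Matrix.vecTail] <;> ring

end SplitQuat
end

section
/- Euler formula for timelike pure unit split quaternions (left matrix): let q = u₁i + u₂j + u₃k with -u₁² + u₂² + u₃² = -1. Then for every θ ∈ ℝ, exp(θ L_q) = cos θ · I₄ + sin θ · L_q, where exp is the matrix exponential. -/
open Matrix Real

namespace SplitQuat

theorem euler_L_timelike (u₁ u₂ u₃ : ℝ) (h : -u₁ ^ 2 + u₂ ^ 2 + u₃ ^ 2 = -1) (θ : ℝ) :
    NormedSpace.exp (θ • L ⟨0, u₁, u₂, u₃⟩) =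
      Real.cos θ • (1 : Matrix (Fin 4) (Fin 4) ℝ) + Real.sin θ • L ⟨0, u₁, u₂, u₃⟩ := by
  set A : Matrix (Fin 4) (Fin 4) ℝ := L ⟨0, u₁, u₂, u₃⟩ with hA
  have hsq : A * A = -1 := by
    ext i j
    fin_cases i <;> fin_cases j <;>
      simp [hA, L, Matrix.mul_apply, Fin.sum_univ_four, Matrix.one_apply] <;>
      nlinarith [h]
  letI : SeminormedRing (Matrix (Fin 4) (Fin 4) ℝ) := Matrix.linftyOpSemiNormedRing
  letI : NormedRing (Matrix (Fin 4) (Fin 4) ℝ) := Matrix.linftyOpNormedRing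
  letI : NormedAlgebra ℝ (Matrix (Fin 4) (Fin 4) ℝ) := Matrix.linftyOpNormedAlgebra
  let φ : ℂ →ₐ[ℝ] Matrix (Fin 4) (Fin 4) ℝ := Complex.liftAux A hsq
  have hφc : Continuous φ := φ.toLinearMap.continuous_of_finiteDimensional
  have key : φ (θ * Complex.I) = θ • A := by
    rw [Complex.liftAux_apply]
    simp
  calc NormedSpace.exp (θ • A) = NormedSpace.exp (φ (θ * Complex.I)) := by rw [key]
    _ = φ (NormedSpace.exp (θ * Complex.I)) := (NormedSpace.map_exp φ hφc _).symm
    _ = φ (Complex.exp (θ * Complex.I)) := by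
        rw [Complex.exp_eq_exp_ℂ]
    _ = Real.cos θ • (1 : Matrix (Fin 4) (Fin 4) ℝ) + Real.sin θ • A := by
        rw [Complex.exp_mul_I, Complex.liftAux_apply]
        simp [Algebra.algebraMap_eq_smul_one, Complex.cos_ofReal_re, Complex.sin_ofReal_re]
  
end SplitQuat
end

section
/- Euler formula for timelike pure unit split quaternions (right matrix): let q = u₁i + u₂j + u₃k with -u₁² + u₂² + u₃² = -1. Then for every θ ∈ ℝ, exp(θ R_q) = cos θ · I₄ + sin θ · R_q. -/
open Matrix Real

namespace SplitQuat

attribute [local instance] Matrix.linftyOpNormedRing Matrix.linftyOpNormedAlgebra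

theorem euler_R_timelike (u₁ u₂ u₃ : ℝ) (h : -u₁ ^ 2 + u₂ ^ 2 + u₃ ^ 2 = -1) (θ : ℝ) :
    NormedSpace.exp (θ • R ⟨0, u₁, u₂, u₃⟩) =
      Real.cos θ • (1 : Matrix (Fin 4) (Fin 4) ℝ) + Real.sin θ • R ⟨0, u₁, u₂, u₃⟩ := by
  set A : Matrix (Fin 4) (Fin 4) ℝ := R ⟨0, u₁, u₂, u₃⟩ with hA
  have hA2 : A * A = -1 := by
    ext i j
    fin_cases i <;> fin_cases j <;>
      simp [hA, R, Matrix.mul_apply, Fin.sum_univ_four, Matrix.one_apply] <;>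
      nlinarith [h]
  let φ : ℂ →ₐ[ℝ] Matrix (Fin 4) (Fin 4) ℝ := Complex.liftAux A hA2
  have hφ : Continuous φ := φ.toLinearMap.continuous_of_finiteDimensional
  have h1 : φ (θ * Complex.I) = θ • A := by
    rw [Complex.liftAux_apply]
    simp
  have h2 : NormedSpace.exp (θ • A) = φ (NormedSpace.exp (θ * Complex.I)) := by
    rw [NormedSpace.map_exp φ hφ, h1]
    rfl
  rw [h2, ← Complex.exp_eq_exp_ℂ, Complex.exp_mul_I,
    Complex.liftAux_apply]
  simp [Algebra.algebraMap_eq_smul_one, Complex.cos_ofReal_re, Complex.sin_ofReal_re]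

end SplitQuat
end

section
/- Euler formula for spacelike pure unit split quaternions (right matrix): let q = u₁i + u₂j + u₃k with -u₁² + u₂² + u₃² = 1. Then for every θ ∈ ℝ, exp(θ R_q) = cosh θ · I₄ + sinh θ · R_q. -/
open Matrix Real

namespace SplitQuat

theorem euler_R_spacelike (u₁ u₂ u₃ : ℝ) (h : -u₁ ^ 2 + u₂ ^ 2 + u₃ ^ 2 = 1) (θ : ℝ) :
    NormedSpace.exp (θ • R ⟨0, u₁, u₂, u₃⟩) =
      Real.cosh θ • (1 : Matrix (Fin 4) (Fin 4) ℝ) + Real.sinh θ • R ⟨0, u₁, u₂, u₃⟩ := by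
  set A : Matrix (Fin 4) (Fin 4) ℝ := R ⟨0, u₁, u₂, u₃⟩ with hA
  have hA2 : A ^ 2 = 1 := by
    rw [pow_two, hA]
    ext i j
    fin_cases i <;> fin_cases j <;>
      simp [R, Matrix.mul_apply, Fin.sum_univ_succ, Matrix.one_apply] <;>
      nlinarith [h]
  have key : HasSum (fun n : ℕ => ((n.factorial : ℝ)⁻¹) • (θ • A) ^ n)
      (Real.cosh θ • (1 : Matrix (Fin 4) (Fin 4) ℝ) + Real.sinh θ • A) := by
    have he := (Real.hasSum_cosh θ).smul_const (1 : Matrix (Fin 4) (Fin 4) ℝ)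
    have ho := (Real.hasSum_sinh θ).smul_const A
    refine HasSum.even_add_odd ?_ ?_
    · convert he using 2 with k
      have hAe : A ^ (2 * k) = 1 := by rw [pow_mul, hA2, one_pow]
      rw [smul_pow, hAe, smul_smul]
      congr 1
      field_simp
    · convert ho using 2 with k
      have hAo : A ^ (2 * k + 1) = A := by rw [pow_succ, pow_mul, hA2, one_pow, one_mul]
      rw [smul_pow, hAo, smul_smul]
      congr 1
      field_simp
  rw [NormedSpace.exp_eq_tsum ℝ]
  exact key.tsum_eq

end SplitQuat
end

section
/- De Moivre's formula for timelike split quaternions with spacelike vector part: let ε be a pure split quaternion with ε² = 1 (ε ≠ ±1), N > 0, and q = N(cosh θ + ε sinh θ). Then for every natural number n, qⁿ = Nⁿ(cosh(nθ) + ε sinh(nθ)) in the split quaternion algebra. -/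
open Matrix Real

namespace SplitQuat

theorem deMoivre_quat_spacelike (ε : QuaternionAlgebra ℝ (-1) 0 1) (hre : ε.re = 0)
    (hε : ε ^ 2 = 1) (hε1 : ε ≠ 1) (hε2 : ε ≠ -1) (N θ : ℝ) (hN : 0 < N)
    (q : QuaternionAlgebra ℝ (-1) 0 1)
    (hq : q = N • (Real.cosh θ • (1 : QuaternionAlgebra ℝ (-1) 0 1) + Real.sinh θ • ε)) (n : ℕ) :
    q ^ n = N ^ n • (Real.cosh (n * θ) • (1 : QuaternionAlgebra ℝ (-1) 0 1) +
      Real.sinh (n * θ) • ε) := by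
  have hεε : ε * ε = 1 := by rw [← sq]; exact hε
  have key : ∀ a b c d : ℝ,
      (a • (1 : QuaternionAlgebra ℝ (-1) 0 1) + b • ε) * (c • 1 + d • ε) =
      (a * c + b * d) • 1 + (a * d + b * c) • ε := by
    intro a b c d
    simp only [add_mul, mul_add, smul_mul_smul_comm, hεε, one_mul, mul_one, add_smul]
    abel
  induction n with
  | zero => simp
  | succ n ih =>
    rw [pow_succ, ih, hq, smul_mul_smul_comm, key, ← pow_succ]
    have h1 : ((n : ℕ) + 1 : ℕ) * θ = n * θ + θ := by push_cast; ring
    rw [h1, Real.cosh_add, Real.sinh_add]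
    ring_nf

end SplitQuat
end
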